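/- For odd n ≥ 5, eqdim(S_n) = 2n, with the set {a_i, c_i : i = 0,…,n−1} being a distance-equalizer set of minimum cardinality. -/

import Mathlib

/-- `S` is a distance-equalizer set of `G`. -/
def IsDistEqSet {V : Type*} (G : SimpleGraph V) (S : Set V) : Prop :=
  ∀ u v : V, u ∉ S → v ∉ S → u ≠ v → ∃ x ∈ S, G.dist u x = G.dist v x

/-- The equidistant dimension of `G`. -/
noncomputable def eqdim {V : Type*} (G : SimpleGraph V) : ℕ :=
  sInf {k | ∃ S : Finset V, IsDistEqSet G ↑S ∧ S.card = k}

/-- The convex polytope graph `S_n` on vertex layers a=0, b=1, c=2, d=3. -/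
def SGraph (n : ℕ) : SimpleGraph (Fin 4 × ZMod n) :=
  SimpleGraph.fromRel (fun x y =>
    (x.1 = y.1 ∧ y.2 = x.2 + 1) ∨
    (x.1 = 0 ∧ y.1 = 1 ∧ y.2 = x.2) ∨
    (x.1 = 1 ∧ y.1 = 2 ∧ y.2 = x.2) ∨
    (x.1 = 2 ∧ y.1 = 3 ∧ y.2 = x.2) ∨
    (x.1 = 0 ∧ y.1 = 1 ∧ x.2 = y.2 + 1))

def cyc (n : ℕ) (m : ZMod n) : ℕ := min m.val (n - m.val)

lemma val_add_one {n : ℕ} (hn : 5 ≤ n) (m : ZMod n) :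
    ((m + 1).val = m.val + 1 ∧ m.val + 1 < n) ∨ ((m + 1).val = 0 ∧ m.val = n - 1) := by
  haveI : NeZero n := ⟨by omega⟩
  haveI : Fact (1 < n) := ⟨by omega⟩
  have h := ZMod.val_add m 1
  rw [ZMod.val_one] at h
  have h2 := ZMod.val_lt m
  rcases lt_or_ge (m.val + 1) n with hlt | hge
  · left; exact ⟨by rw [h, Nat.mod_eq_of_lt hlt], hlt⟩
  · right
    have he : m.val + 1 = n := by omega
    refine ⟨?_, by omega⟩
    rw [h, he, Nat.mod_self]

lemma cyc_succ {n : ℕ} (hn : 5 ≤ n) (m : ZMod n) :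
    cyc n (m + 1) ≤ cyc n m + 1 ∧ cyc n m ≤ cyc n (m + 1) + 1 := by
  haveI : NeZero n := ⟨by omega⟩
  have h := val_add_one hn m
  have h2 := ZMod.val_lt m
  have h3 := ZMod.val_lt (m + 1)
  unfold cyc
  rcases h with ⟨h, h'⟩ | ⟨h, h'⟩ <;> omega

lemma cyc_neg {n : ℕ} (hn : 5 ≤ n) (m : ZMod n) : cyc n (-m) = cyc n m := by
  haveI : NeZero n := ⟨by omega⟩
  rcases eq_or_ne m 0 with rfl | hm
  · simp
  · have h := ZMod.neg_val m
    rw [if_neg hm] at h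
    have h2 := ZMod.val_lt m
    have h3 : m.val ≠ 0 := by simpa [ZMod.val_eq_zero] using hm
    unfold cyc
    omega

lemma keyF {n : ℕ} (hn : 5 ≤ n) (hodd : Odd n) (u : ZMod n) :
    cyc n u ≠ 1 + min (cyc n (u + 2)) (cyc n (u + 3)) := by
  haveI : NeZero n := ⟨by omega⟩
  obtain ⟨t, ht⟩ := hodd
  have e1 := val_add_one hn u
  have e2 := val_add_one hn (u + 1)
  have e3 := val_add_one hn (u + 2)
  have r2 : u + 1 + 1 = u + 2 := by ring
  have r3 : u + 2 + 1 = u + 3 := by ring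
  rw [r2] at e2
  rw [r3] at e3
  have h0 := ZMod.val_lt u
  have h1 := ZMod.val_lt (u + 1)
  have h2 := ZMod.val_lt (u + 2)
  have h3 := ZMod.val_lt (u + 3)
  unfold cyc
  rcases e1 with ⟨a, a'⟩ | ⟨a, a'⟩ <;> rcases e2 with ⟨b, b'⟩ | ⟨b, b'⟩ <;>
    rcases e3 with ⟨c, c'⟩ | ⟨c, c'⟩ <;> omega

namespace SAux

variable {n : ℕ}

lemma adj_layer (hn : 5 ≤ n) (l : Fin 4) (i : ZMod n) : (SGraph n).Adj (l, i) (l, i + 1) := by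
  haveI : Fact (1 < n) := ⟨by omega⟩
  rw [SGraph, SimpleGraph.fromRel_adj]
  refine ⟨?_, Or.inl (Or.inl ⟨rfl, rfl⟩)⟩
  intro h
  have h2 : i = i + 1 := congrArg Prod.snd h
  simp at h2

lemma adj01 (i : ZMod n) : (SGraph n).Adj (0, i) (1, i) := by
  rw [SGraph, SimpleGraph.fromRel_adj]
  refine ⟨?_, Or.inl (Or.inr (Or.inl ⟨rfl, rfl, rfl⟩))⟩
  intro h
  rw [Prod.ext_iff] at h
  exact absurd h.1 (by simp)

lemma adj12 (i : ZMod n) : (SGraph n).Adj (1, i) (2, i) := by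
  rw [SGraph, SimpleGraph.fromRel_adj]
  refine ⟨?_, Or.inl (Or.inr (Or.inr (Or.inl ⟨rfl, rfl, rfl⟩)))⟩
  intro h
  rw [Prod.ext_iff] at h
  exact absurd h.1 (by simp)

lemma adj23 (i : ZMod n) : (SGraph n).Adj (2, i) (3, i) := by
  rw [SGraph, SimpleGraph.fromRel_adj]
  refine ⟨?_, Or.inl (Or.inr (Or.inr (Or.inr (Or.inl ⟨rfl, rfl, rfl⟩))))⟩
  intro h
  rw [Prod.ext_iff] at h
  exact absurd h.1 (by simp)

lemma adj_diag (i : ZMod n) : (SGraph n).Adj (0, i + 1) (1, i) := by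
  rw [SGraph, SimpleGraph.fromRel_adj]
  refine ⟨?_, Or.inl (Or.inr (Or.inr (Or.inr (Or.inr ⟨rfl, rfl, rfl⟩))))⟩
  intro h
  rw [Prod.ext_iff] at h
  exact absurd h.1 (by simp)

lemma reach_add (hn : 5 ≤ n) (l : Fin 4) (i : ZMod n) :
    ∀ k : ℕ, (SGraph n).Reachable (l, i) (l, i + (k : ZMod n))
  | 0 => by simpa using SimpleGraph.Reachable.refl _
  | (k + 1) => by
      refine (reach_add hn l i k).trans ?_
      have hc : ((k + 1 : ℕ) : ZMod n) = (k : ZMod n) + 1 := by push_cast; ring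
      rw [hc, ← add_assoc]
      exact (adj_layer hn l _).reachable

lemma reach0 (hn : 5 ≤ n) (l : Fin 4) (i : ZMod n) :
    (SGraph n).Reachable (l, i) (0, i) := by
  fin_cases l
  · rfl
  · exact (adj01 i).symm.reachable
  · exact ((adj12 i).symm.reachable).trans (adj01 i).symm.reachable
  · exact (((adj23 i).symm.reachable).trans (adj12 i).symm.reachable).trans (adj01 i).symm.reachable

lemma conn (hn : 5 ≤ n) : (SGraph n).Connected := by
  haveI : NeZero n := ⟨by omega⟩
  rw [SimpleGraph.connected_iff]
  refine ⟨?_, ⟨(0, 0)⟩⟩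
  rintro ⟨lu, iu⟩ ⟨lv, iv⟩
  refine (reach0 hn lu iu).trans (.trans ?_ (reach0 hn lv iv).symm)
  have := reach_add hn 0 iu (iv - iu).val
  rwa [ZMod.natCast_zmod_val, show iu + (iv - iu) = iv by ring] at this

lemma adj_dist_le {x y : Fin 4 × ZMod n} (h : (SGraph n).Adj x y) :
    (SGraph n).dist x y ≤ 1 :=
  le_of_eq (SimpleGraph.dist_eq_one_iff_adj.mpr h)

lemma dist_step (hn : 5 ≤ n) (l : Fin 4) (i : ZMod n) :
    ∀ k : ℕ, (SGraph n).dist (l, i) (l, i + (k : ZMod n)) ≤ k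
  | 0 => by simp
  | (k + 1) => by
      have h1 := dist_step hn l i k
      have hadj : (SGraph n).Adj (l, i + (k : ZMod n)) (l, i + ((k + 1 : ℕ) : ZMod n)) := by
        have hc : ((k + 1 : ℕ) : ZMod n) = (k : ZMod n) + 1 := by push_cast; ring
        rw [hc, ← add_assoc]
        exact adj_layer hn l _
      have tri := (conn hn).dist_triangle (u := (l, i)) (v := (l, i + (k : ZMod n)))
        (w := (l, i + ((k + 1 : ℕ) : ZMod n)))
      have h2 := adj_dist_le hadj
      omega

lemma dist_cyc (hn : 5 ≤ n) (l : Fin 4) (i j : ZMod n) :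
    (SGraph n).dist (l, i) (l, j) ≤ cyc n (j - i) := by
  haveI : NeZero n := ⟨by omega⟩
  have h1 : (SGraph n).dist (l, i) (l, j) ≤ (j - i).val := by
    have := dist_step hn l i (j - i).val
    rwa [ZMod.natCast_zmod_val, show i + (j - i) = j by ring] at this
  rcases eq_or_ne j i with rfl | hne
  · simp [SimpleGraph.dist_self]
  · have h2 : (SGraph n).dist (l, i) (l, j) ≤ (i - j).val := by
      have := dist_step hn l j (i - j).val
      rw [ZMod.natCast_zmod_val, show j + (i - j) = i by ring] at this
      calc (SGraph n).dist (l, i) (l, j) = (SGraph n).dist (l, j) (l, i) :=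
            SimpleGraph.dist_comm
        _ ≤ _ := this
    have hneg : (i - j).val = n - (j - i).val := by
      rw [show i - j = -(j - i) by ring, ZMod.neg_val, if_neg (sub_ne_zero.mpr hne)]
    have hv := ZMod.val_lt (j - i)
    unfold cyc
    omega

/-- The claimed distance function on `SGraph n`. -/
def D (n : ℕ) (u v : Fin 4 × ZMod n) : ℕ :=
  if u.1 = 0 then
    if v.1 = 0 then cyc n (v.2 - u.2)
    else v.1.val + min (cyc n (v.2 - u.2)) (cyc n (v.2 - u.2 + 1))
  else if v.1 = 0 then u.1.val + min (cyc n (u.2 - v.2)) (cyc n (u.2 - v.2 + 1))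
  else (max u.1.val v.1.val - min u.1.val v.1.val) + cyc n (v.2 - u.2)

lemma dist_le_ab (hn : 5 ≤ n) (i k : ZMod n) :
    (SGraph n).dist (0, i) (1, k) ≤ 1 + min (cyc n (k - i)) (cyc n (k - i + 1)) := by
  rcases le_total (cyc n (k - i)) (cyc n (k - i + 1)) with h | h
  · rw [min_eq_left h]
    have tri := (conn hn).dist_triangle (u := ((0 : Fin 4), i)) (v := ((0 : Fin 4), k))
      (w := ((1 : Fin 4), k))
    have h1 := dist_cyc hn 0 i k
    have h2 := adj_dist_le (adj01 (n := n) k)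
    omega
  · rw [min_eq_right h]
    have tri := (conn hn).dist_triangle (u := ((0 : Fin 4), i)) (v := ((0 : Fin 4), k + 1))
      (w := ((1 : Fin 4), k))
    have h1 := dist_cyc hn 0 i (k + 1)
    have h2 := adj_dist_le (adj_diag (n := n) k)
    rw [show k + 1 - i = k - i + 1 by ring] at h1
    omega

lemma dist_le_D (hn : 5 ≤ n) (u v : Fin 4 × ZMod n) :
    (SGraph n).dist u v ≤ D n u v := by
  haveI : NeZero n := ⟨by omega⟩
  obtain ⟨w, i⟩ := u
  obtain ⟨z, k⟩ := v
  have hconn := conn hn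
  have hng : cyc n (i - k) = cyc n (k - i) := by
    rw [show i - k = -(k - i) by ring, cyc_neg hn]
  fin_cases w <;> fin_cases z
  -- (0,0)
  · exact dist_cyc hn 0 i k
  -- (0,1)
  · exact dist_le_ab hn i k
  -- (0,2)
  · show (SGraph n).dist (0, i) (2, k) ≤ 2 + min (cyc n (k - i)) (cyc n (k - i + 1))
    have tri := hconn.dist_triangle (u := ((0 : Fin 4), i)) (v := ((1 : Fin 4), k))
      (w := ((2 : Fin 4), k))
    have h1 := dist_le_ab hn i k
    have h2 := adj_dist_le (adj12 (n := n) k)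
    omega
  -- (0,3)
  · show (SGraph n).dist (0, i) (3, k) ≤ 3 + min (cyc n (k - i)) (cyc n (k - i + 1))
    have tri := hconn.dist_triangle (u := ((0 : Fin 4), i)) (v := ((2 : Fin 4), k))
      (w := ((3 : Fin 4), k))
    have tri2 := hconn.dist_triangle (u := ((0 : Fin 4), i)) (v := ((1 : Fin 4), k))
      (w := ((2 : Fin 4), k))
    have h1 := dist_le_ab hn i k
    have h2 := adj_dist_le (adj12 (n := n) k)
    have h3 := adj_dist_le (adj23 (n := n) k)
    omega
  -- (1,0)
  · show (SGraph n).dist (1, i) (0, k) ≤ 1 + min (cyc n (i - k)) (cyc n (i - k + 1))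
    rw [SimpleGraph.dist_comm]
    exact dist_le_ab hn k i
  -- (1,1)
  · show (SGraph n).dist (1, i) (1, k) ≤ D n (1, i) (1, k)
    simpa [D] using dist_cyc hn 1 i k
  -- (1,2)
  · show (SGraph n).dist (1, i) (2, k) ≤ 1 + cyc n (k - i)
    have tri := hconn.dist_triangle (u := ((1 : Fin 4), i)) (v := ((2 : Fin 4), i))
      (w := ((2 : Fin 4), k))
    have h1 := dist_cyc hn 2 i k
    have h2 := adj_dist_le (adj12 (n := n) i)
    omega
  -- (1,3)
  · show (SGraph n).dist (1, i) (3, k) ≤ 2 + cyc n (k - i)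
    have tri := hconn.dist_triangle (u := ((1 : Fin 4), i)) (v := ((2 : Fin 4), i))
      (w := ((3 : Fin 4), k))
    have tri2 := hconn.dist_triangle (u := ((2 : Fin 4), i)) (v := ((3 : Fin 4), i))
      (w := ((3 : Fin 4), k))
    have h1 := dist_cyc hn 3 i k
    have h2 := adj_dist_le (adj12 (n := n) i)
    have h3 := adj_dist_le (adj23 (n := n) i)
    omega
  -- (2,0)
  · show (SGraph n).dist (2, i) (0, k) ≤ 2 + min (cyc n (i - k)) (cyc n (i - k + 1))
    rw [SimpleGraph.dist_comm]
    have tri := hconn.dist_triangle (u := ((0 : Fin 4), k)) (v := ((1 : Fin 4), i))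
      (w := ((2 : Fin 4), i))
    have h1 := dist_le_ab hn k i
    have h2 := adj_dist_le (adj12 (n := n) i)
    omega
  -- (2,1)
  · show (SGraph n).dist (2, i) (1, k) ≤ 1 + cyc n (k - i)
    rw [SimpleGraph.dist_comm]
    have tri := hconn.dist_triangle (u := ((1 : Fin 4), k)) (v := ((2 : Fin 4), k))
      (w := ((2 : Fin 4), i))
    have h1 := dist_cyc hn 2 k i
    have h2 := adj_dist_le (adj12 (n := n) k)
    omega
  -- (2,2)
  · show (SGraph n).dist (2, i) (2, k) ≤ D n (2, i) (2, k)
    simpa [D] using dist_cyc hn 2 i k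
  -- (2,3)
  · show (SGraph n).dist (2, i) (3, k) ≤ 1 + cyc n (k - i)
    have tri := hconn.dist_triangle (u := ((2 : Fin 4), i)) (v := ((3 : Fin 4), i))
      (w := ((3 : Fin 4), k))
    have h1 := dist_cyc hn 3 i k
    have h2 := adj_dist_le (adj23 (n := n) i)
    omega
  -- (3,0)
  · show (SGraph n).dist (3, i) (0, k) ≤ 3 + min (cyc n (i - k)) (cyc n (i - k + 1))
    rw [SimpleGraph.dist_comm]
    have tri := hconn.dist_triangle (u := ((0 : Fin 4), k)) (v := ((2 : Fin 4), i))
      (w := ((3 : Fin 4), i))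
    have tri2 := hconn.dist_triangle (u := ((0 : Fin 4), k)) (v := ((1 : Fin 4), i))
      (w := ((2 : Fin 4), i))
    have h1 := dist_le_ab hn k i
    have h2 := adj_dist_le (adj12 (n := n) i)
    have h3 := adj_dist_le (adj23 (n := n) i)
    omega
  -- (3,1)
  · show (SGraph n).dist (3, i) (1, k) ≤ 2 + cyc n (k - i)
    rw [SimpleGraph.dist_comm]
    have tri := hconn.dist_triangle (u := ((1 : Fin 4), k)) (v := ((2 : Fin 4), k))
      (w := ((3 : Fin 4), i))
    have tri2 := hconn.dist_triangle (u := ((2 : Fin 4), k)) (v := ((3 : Fin 4), k))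
      (w := ((3 : Fin 4), i))
    have h1 := dist_cyc hn 3 k i
    have h2 := adj_dist_le (adj12 (n := n) k)
    have h3 := adj_dist_le (adj23 (n := n) k)
    omega
  -- (3,2)
  · show (SGraph n).dist (3, i) (2, k) ≤ 1 + cyc n (k - i)
    rw [SimpleGraph.dist_comm]
    have tri := hconn.dist_triangle (u := ((2 : Fin 4), k)) (v := ((3 : Fin 4), k))
      (w := ((3 : Fin 4), i))
    have h1 := dist_cyc hn 3 k i
    have h2 := adj_dist_le (adj23 (n := n) k)
    omega
  -- (3,3)
  · show (SGraph n).dist (3, i) (3, k) ≤ D n (3, i) (3, k)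
    simpa [D] using dist_cyc hn 3 i k



lemma walk_bound {V : Type*} {G : SimpleGraph V} (f : V → ℕ)
    (hlip : ∀ x y : V, G.Adj x y → f y ≤ f x + 1) :
    ∀ {a b : V} (p : G.Walk a b), f b ≤ f a + p.length := by
  intro a b p
  induction p with
  | nil => simp
  | @cons u v w h q ih =>
      have h1 := hlip u v h
      rw [SimpleGraph.Walk.length_cons]
      omega

lemma D_lip_rel (hn : 5 ≤ n) (w : Fin 4) (s : ZMod n) (xl yl : Fin 4) (xi yi : ZMod n)
    (h : (xl = yl ∧ yi = xi + 1) ∨ (xl = 0 ∧ yl = 1 ∧ yi = xi) ∨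
      (xl = 1 ∧ yl = 2 ∧ yi = xi) ∨ (xl = 2 ∧ yl = 3 ∧ yi = xi) ∨
      (xl = 0 ∧ yl = 1 ∧ xi = yi + 1)) :
    D n (w, s) (yl, yi) ≤ D n (w, s) (xl, xi) + 1 ∧
      D n (w, s) (xl, xi) ≤ D n (w, s) (yl, yi) + 1 := by
  haveI : NeZero n := ⟨by omega⟩
  have hwlt : w.val < 4 := w.isLt
  have hxlt : xl.val < 4 := xl.isLt
  have hf1 : ((1 : Fin 4)).val = 1 := rfl
  have hf2 : ((2 : Fin 4)).val = 2 := rfl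
  have hf3 : ((3 : Fin 4)).val = 3 := rfl
  rcases h with ⟨rfl, rfl⟩ | ⟨rfl, rfl, rfl⟩ | ⟨rfl, rfl, rfl⟩ | ⟨rfl, rfl, rfl⟩ |
    ⟨rfl, rfl, rfl⟩
  · -- same layer, yi = xi + 1
    by_cases hw : w = 0
    · subst hw
      by_cases hx : xl = 0
      · subst hx
        simp only [D, if_pos rfl]
        rw [show xi + 1 - s = (xi - s) + 1 by ring]
        exact ⟨(cyc_succ hn _).1, (cyc_succ hn _).2⟩
      · simp [D, hx]
        have e1 : xi + 1 - s = (xi - s) + 1 := by ring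
        rw [e1]
        have c1 := cyc_succ hn (xi - s)
        have c2 := cyc_succ hn ((xi - s) + 1)
        omega
    · by_cases hx : xl = 0
      · subst hx
        simp [D, hw]
        have e1 : s - (xi + 1) = (s - xi) - 1 := by ring
        have e3 : ((s - xi) - 1) + 1 = s - xi := by ring
        rw [e1, e3]
        have c1 := cyc_succ hn ((s - xi) - 1)
        have c2 := cyc_succ hn (s - xi)
        rw [e3] at c1
        omega
      · simp [D, hw, hx]
        have e1 : xi + 1 - s = (xi - s) + 1 := by ring
        rw [e1]
        have c1 := cyc_succ hn (xi - s)
        omega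
  · -- a--b vertical
    by_cases hw : w = 0
    · subst hw
      simp [D]
      have c1 := cyc_succ hn (yi - s)
      omega
    · simp [D, hw]
      have hwv : w.val ≠ 0 := fun h => hw (Fin.ext h)
      have hng : cyc n (yi - s) = cyc n (s - yi) := by
        rw [show yi - s = -(s - yi) by ring, cyc_neg hn]
      have c1 := cyc_succ hn (s - yi)
      omega
  · -- b--c vertical
    by_cases hw : w = 0
    · subst hw
      simp [D]
      omega
    · simp [D, hw]
      have hwv : w.val ≠ 0 := fun h => hw (Fin.ext h)
      omega
  · -- c--d vertical
    by_cases hw : w = 0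
    · subst hw
      simp [D]
      omega
    · simp [D, hw]
      have hwv : w.val ≠ 0 := fun h => hw (Fin.ext h)
      omega
  · -- diagonal a_{i+1} -- b_i
    by_cases hw : w = 0
    · subst hw
      simp [D]
      have e1 : yi + 1 - s = (yi - s) + 1 := by ring
      rw [e1]
      have c1 := cyc_succ hn (yi - s)
      omega
    · simp [D, hw]
      have hwv : w.val ≠ 0 := fun h => hw (Fin.ext h)
      have hng : cyc n (yi - s) = cyc n (s - yi) := by
        rw [show yi - s = -(s - yi) by ring, cyc_neg hn]
      have e1 : s - (yi + 1) = (s - yi) - 1 := by ring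
      have e3 : ((s - yi) - 1) + 1 = s - yi := by ring
      rw [e1, e3]
      have c1 := cyc_succ hn ((s - yi) - 1)
      rw [e3] at c1
      omega

lemma D_lip (hn : 5 ≤ n) (u : Fin 4 × ZMod n) :
    ∀ x y : Fin 4 × ZMod n, (SGraph n).Adj x y → D n u y ≤ D n u x + 1 := by
  rintro ⟨xl, xi⟩ ⟨yl, yi⟩ h
  obtain ⟨w, s⟩ := u
  rw [SGraph, SimpleGraph.fromRel_adj] at h
  rcases h.2 with h2 | h2
  · exact (D_lip_rel hn w s xl yl xi yi h2).1
  · exact (D_lip_rel hn w s yl xl yi xi h2).2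

lemma D_self (hn : 5 ≤ n) (u : Fin 4 × ZMod n) : D n u u = 0 := by
  haveI : NeZero n := ⟨by omega⟩
  obtain ⟨w, s⟩ := u
  by_cases hw : w = 0 <;> simp [D, hw, cyc]

theorem dist_eq_D (hn : 5 ≤ n) (u v : Fin 4 × ZMod n) :
    (SGraph n).dist u v = D n u v := by
  refine le_antisymm (dist_le_D hn u v) ?_
  obtain ⟨p, hp⟩ := ((conn hn) u v).exists_walk_length_eq_dist
  have := walk_bound (D n u) (D_lip hn u) p
  rw [hp, D_self hn u] at this
  omega

end SAux

theorem stmt18 (n : ℕ) (hn : 5 ≤ n) (hodd : Odd n) :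
    IsDistEqSet (SGraph n) {x : Fin 4 × ZMod n | x.1 = 0 ∨ x.1 = 2} ∧
    ({x : Fin 4 × ZMod n | x.1 = 0 ∨ x.1 = 2}).ncard = 2 * n ∧
    eqdim (SGraph n) = 2 * n := by
  haveI : NeZero n := ⟨by omega⟩
  obtain ⟨t, ht⟩ := hodd
  have hodd' : Odd n := ⟨t, ht⟩
  -- Part 1
  have hS : IsDistEqSet (SGraph n) {x : Fin 4 × ZMod n | x.1 = 0 ∨ x.1 = 2} := by
    rintro ⟨w, i⟩ ⟨z, j⟩ hu hv huv
    simp only [Set.mem_setOf_eq] at hu hv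
    push_neg at hu hv
    have hcases : ∀ w : Fin 4, w ≠ 0 → w ≠ 2 → w = 1 ∨ w = 3 := by decide
    have hw1 := hcases w hu.1 hu.2
    have hz1 := hcases z hv.1 hv.2
    set k : ZMod n := ((t + 1 : ℕ) : ZMod n) * (i + j) with hk
    have h2k : k + k = i + j := by
      have he : k + k = ((2 * t + 2 : ℕ) : ZMod n) * (i + j) := by
        rw [hk]; push_cast; ring
      have hn1 : ((2 * t + 2 : ℕ) : ZMod n) = 1 := by
        rw [show (2 * t + 2 : ℕ) = n + 1 by omega]
        push_cast
        simp
      rw [he, hn1, one_mul]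
    have hmir : k - i = -(k - j) := by linear_combination h2k
    have hcyceq : cyc n (k - i) = cyc n (k - j) := by rw [hmir, cyc_neg hn]
    refine ⟨(2, k), Or.inr rfl, ?_⟩
    rw [SAux.dist_eq_D hn, SAux.dist_eq_D hn]
    rcases hw1 with rfl | rfl <;> rcases hz1 with rfl | rfl <;> simp [SAux.D, hcyceq] <;> rfl
  -- the witness finset
  have hsetEq : (↑(({0, 2} : Finset (Fin 4)) ×ˢ (Finset.univ : Finset (ZMod n))) : Set (Fin 4 × ZMod n))
      = {x : Fin 4 × ZMod n | x.1 = 0 ∨ x.1 = 2} := by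
    ext ⟨w, i⟩
    simp [Finset.mem_product]
  have hcard0 : (({0, 2} : Finset (Fin 4)) ×ˢ (Finset.univ : Finset (ZMod n))).card = 2 * n := by
    rw [Finset.card_product, Finset.card_univ, ZMod.card]
    rfl
  have hncard : ({x : Fin 4 × ZMod n | x.1 = 0 ∨ x.1 = 2}).ncard = 2 * n := by
    rw [← hsetEq, Set.ncard_coe_finset, hcard0]
  refine ⟨hS, hncard, ?_⟩
  -- Part 3
  apply le_antisymm
  · apply Nat.sInf_le
    exact ⟨({0, 2} : Finset (Fin 4)) ×ˢ (Finset.univ : Finset (ZMod n)),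
      by rw [hsetEq]; exact hS, hcard0⟩
  · apply le_csInf
    · refine ⟨(Finset.univ : Finset (Fin 4 × ZMod n)).card, Finset.univ, ?_, rfl⟩
      intro u v hu hv huv
      exact absurd (by simp : u ∈ (↑(Finset.univ : Finset (Fin 4 × ZMod n)) : Set _)) hu
    rintro k ⟨S, hSeq, rfl⟩
    have hfv : ∀ w : Fin 4, w ≠ 0 → 1 ≤ w.val ∧ w.val < 4 := by decide
    -- each pair (c_i, d_i) meets S
    have hCD : ∀ i : ZMod n, ((2 : Fin 4), i) ∈ S ∨ ((3 : Fin 4), i) ∈ S := by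
      intro i
      by_contra hcon
      push_neg at hcon
      obtain ⟨x, hxS, hxd⟩ := hSeq (2, i) (3, i) (by simpa using hcon.1)
        (by simpa using hcon.2)
        (by intro h; rw [Prod.ext_iff] at h; exact absurd h.1 (by simp))
      rw [SAux.dist_eq_D hn, SAux.dist_eq_D hn] at hxd
      obtain ⟨xl, xi⟩ := x
      by_cases hx : xl = 0
      · subst hx
        simp [SAux.D] at hxd
      · obtain ⟨hx1, hx4⟩ := hfv xl hx
        simp [SAux.D, hx] at hxd
        have hf2 : ((2 : Fin 4)).val = 2 := rfl
        have hf3 : ((3 : Fin 4)).val = 3 := rfl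
        omega
    -- each pair (a_i, b_{i+2}) meets S
    have hAB : ∀ i : ZMod n, ((0 : Fin 4), i) ∈ S ∨ ((1 : Fin 4), i + 2) ∈ S := by
      intro i
      by_contra hcon
      push_neg at hcon
      obtain ⟨x, hxS, hxd⟩ := hSeq (0, i) (1, i + 2) (by simpa using hcon.1)
        (by simpa using hcon.2)
        (by intro h; rw [Prod.ext_iff] at h; exact absurd h.1 (by simp))
      rw [SAux.dist_eq_D hn, SAux.dist_eq_D hn] at hxd
      obtain ⟨xl, xi⟩ := x
      by_cases hx : xl = 0
      · subst hx
        simp [SAux.D] at hxd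
        have hthis := keyF hn hodd' (-(xi - i))
        rw [cyc_neg hn, show -(xi - i) + 2 = -((xi - i) - 2) by ring,
          show -(xi - i) + 3 = -((xi - i) - 3) by ring, cyc_neg hn, cyc_neg hn] at hthis
        rw [show i + 2 - xi + 1 = -((xi - i) - 3) by ring,
          show i + 2 - xi = -((xi - i) - 2) by ring, cyc_neg hn, cyc_neg hn] at hxd
        exact hthis hxd
      · obtain ⟨hx1, hx4⟩ := hfv xl hx
        simp [SAux.D, hx] at hxd
        rw [show xi - (i + 2) = (xi - i) - 2 by ring] at hxd
        have k1 := keyF hn hodd' ((xi - i) - 2)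
        rw [show (xi - i) - 2 + 2 = xi - i by ring,
          show (xi - i) - 2 + 3 = xi - i + 1 by ring] at k1
        have hf1 : ((1 : Fin 4)).val = 1 := rfl
        omega
    -- build an injection (ZMod n × Bool) → S
    classical
    set F : ZMod n × Bool → Fin 4 × ZMod n := fun p =>
      if p.2 then (if ((0 : Fin 4), p.1) ∈ S then ((0 : Fin 4), p.1) else ((1 : Fin 4), p.1 + 2))
      else (if ((2 : Fin 4), p.1) ∈ S then ((2 : Fin 4), p.1) else ((3 : Fin 4), p.1)) with hF
    have hmaps : ∀ p ∈ (Finset.univ : Finset (ZMod n × Bool)), F p ∈ S := by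
      rintro ⟨i, b⟩ -
      cases b
      · show (if ((2 : Fin 4), i) ∈ S then ((2 : Fin 4), i) else ((3 : Fin 4), i)) ∈ S
        split_ifs with h
        · exact h
        · exact (hCD i).resolve_left h
      · show (if ((0 : Fin 4), i) ∈ S then ((0 : Fin 4), i) else ((1 : Fin 4), i + 2)) ∈ S
        split_ifs with h
        · exact h
        · exact (hAB i).resolve_left h
    have hinj : Set.InjOn F ↑(Finset.univ : Finset (ZMod n × Bool)) := by
      rintro ⟨i, b⟩ - ⟨j, c⟩ - heq
      cases b <;> cases c
      · have heq' : (if ((2 : Fin 4), i) ∈ S then ((2 : Fin 4), i) else ((3 : Fin 4), i))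
            = (if ((2 : Fin 4), j) ∈ S then ((2 : Fin 4), j) else ((3 : Fin 4), j)) := heq
        split_ifs at heq' <;> injection heq' with h1 h2 <;>
          first
            | (exact absurd h1 (by decide))
            | (rw [h2])
      · have heq' : (if ((2 : Fin 4), i) ∈ S then ((2 : Fin 4), i) else ((3 : Fin 4), i))
            = (if ((0 : Fin 4), j) ∈ S then ((0 : Fin 4), j) else ((1 : Fin 4), j + 2)) := heq
        split_ifs at heq' <;> injection heq' with h1 h2 <;> exact absurd h1 (by decide)
      · have heq' : (if ((0 : Fin 4), i) ∈ S then ((0 : Fin 4), i) else ((1 : Fin 4), i + 2))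
            = (if ((2 : Fin 4), j) ∈ S then ((2 : Fin 4), j) else ((3 : Fin 4), j)) := heq
        split_ifs at heq' <;> injection heq' with h1 h2 <;> exact absurd h1 (by decide)
      · have heq' : (if ((0 : Fin 4), i) ∈ S then ((0 : Fin 4), i) else ((1 : Fin 4), i + 2))
            = (if ((0 : Fin 4), j) ∈ S then ((0 : Fin 4), j) else ((1 : Fin 4), j + 2)) := heq
        split_ifs at heq' <;> injection heq' with h1 h2 <;>
          first
            | (exact absurd h1 (by decide))
            | (rw [h2])
            | (rw [add_right_cancel h2])
    have hle := Finset.card_le_card_of_injOn F hmaps hinj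
    rw [Finset.card_univ, Fintype.card_prod, ZMod.card, Fintype.card_bool] at hle
    omega
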